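/- Let q ∈ ℂ with 0 < |q| ≤ 0.31 and x ∈ ℂ with |x| ≤ 8.842. Then ∂²θ/∂x²(q,x) ≠ 0, where θ(q,x) = ∑_{j=0}^∞ q^{j(j+1)/2} x^j. -/

import Mathlib

open Complex

/-- The partial theta function θ(q,x) = ∑_{j=0}^∞ q^{j(j+1)/2} x^j. -/
noncomputable def theta (q x : ℂ) : ℂ := ∑' j : ℕ, q ^ (j * (j + 1) / 2) * x ^ j

lemma tri_succ (n : ℕ) : (n+1)*(n+1+1)/2 = n*(n+1)/2 + (n+1) := by
  have h2 : 2 ∣ n*(n+1) := (Nat.even_mul_succ_self n).two_dvd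
  have h2' : 2 ∣ (n+1)*(n+1+1) := (Nat.even_mul_succ_self (n+1)).two_dvd
  have h3 : (n+1)*(n+1+1) = n*(n+1) + 2*(n+1) := by ring
  omega

/-- Master majorant. -/
noncomputable def uMaj (n : ℕ) : ℝ := ((n:ℝ)+2)^2 * (0.31:ℝ)^(n*(n+1)/2) * 9^n

lemma sumU : Summable uMaj := by
  apply summable_of_ratio_norm_eventually_le (r := 1/2) (by norm_num)
  filter_upwards [Filter.eventually_ge_atTop 3] with n hn
  have h9 : (0:ℝ) ≤ uMaj n := by unfold uMaj; positivity
  rw [Real.norm_of_nonneg (by unfold uMaj; positivity), Real.norm_of_nonneg h9]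
  unfold uMaj
  rw [tri_succ, pow_add]
  push_cast
  have hpow : (0.31:ℝ)^(n+1) ≤ (0.31:ℝ)^4 := by
    apply pow_le_pow_of_le_one (by norm_num) (by norm_num) (by omega)
  have hn' : (3:ℝ) ≤ (n:ℝ) := by exact_mod_cast hn
  have hposa : (0:ℝ) < (0.31:ℝ)^(n*(n+1)/2) := by positivity
  have hposb : (0:ℝ) < (9:ℝ)^n := by positivity
  have key : ((n:ℝ)+1+2)^2 * ((0.31:ℝ)^(n+1) * 9) ≤ 1/2 * ((n:ℝ)+2)^2 := by
    have h1 : ((n:ℝ)+1+2)^2 * ((0.31:ℝ)^(n+1) * 9) ≤ ((n:ℝ)+1+2)^2 * ((0.31:ℝ)^4 * 9) := by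
      have : (0:ℝ) ≤ ((n:ℝ)+1+2)^2 := by positivity
      nlinarith [hpow]
    nlinarith [sq_nonneg ((n:ℝ)+2), sq_nonneg ((n:ℝ)-3)]
  calc ((n:ℝ)+1+2)^2 * ((0.31:ℝ)^(n*(n+1)/2) * (0.31:ℝ)^(n+1)) * 9^(n+1)
      = (((n:ℝ)+1+2)^2 * ((0.31:ℝ)^(n+1) * 9)) * ((0.31:ℝ)^(n*(n+1)/2) * 9^n) := by
        rw [pow_succ]; ring
    _ ≤ (1/2 * ((n:ℝ)+2)^2) * ((0.31:ℝ)^(n*(n+1)/2) * 9^n) := by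
        apply mul_le_mul_of_nonneg_right key (by positivity)
    _ = 1/2 * (((n:ℝ)+2)^2 * (0.31:ℝ)^(n*(n+1)/2) * 9^n) := by ring

section bounds

variable {q y : ℂ}

lemma pow_bound (hy : ‖y‖ ≤ 9) (n k : ℕ) (hk : k ≤ n) : ‖y‖^k ≤ (9:ℝ)^n :=
  le_trans (pow_le_pow_left₀ (norm_nonneg y) hy k)
    (pow_le_pow_right₀ (by norm_num) hk)

lemma qpow_bound (hq' : ‖q‖ ≤ 0.31) (m : ℕ) : ‖q‖^m ≤ (0.31:ℝ)^m :=
  pow_le_pow_left₀ (norm_nonneg q) hq' m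

lemma B0 (hq' : ‖q‖ ≤ 0.31) (hy : ‖y‖ ≤ 9) (n : ℕ) : ‖q^(n*(n+1)/2) * y^n‖ ≤ uMaj n := by
  rw [norm_mul, norm_pow, norm_pow]
  calc ‖q‖^(n*(n+1)/2) * ‖y‖^n ≤ (0.31:ℝ)^(n*(n+1)/2) * ((((n:ℝ)+2)^2) * 9^n) := by
        apply mul_le_mul (qpow_bound hq' _) ?_ (by positivity) (by positivity)
        calc ‖y‖^n ≤ (9:ℝ)^n := pow_bound hy n n le_rfl
          _ ≤ (((n:ℝ)+2)^2) * 9^n := by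
              have h1 : (1:ℝ) ≤ ((n:ℝ)+2)^2 := by nlinarith [(Nat.cast_nonneg n : (0:ℝ) ≤ (n:ℝ))]
              nlinarith [pow_pos (show (0:ℝ) < 9 by norm_num) n]
    _ = uMaj n := by unfold uMaj; ring

lemma B1 (hq' : ‖q‖ ≤ 0.31) (hy : ‖y‖ ≤ 9) (n : ℕ) : ‖q^(n*(n+1)/2) * ((n:ℂ) * y^(n-1))‖ ≤ uMaj n := by
  rw [norm_mul, norm_mul, norm_pow, norm_pow, Complex.norm_natCast]
  calc ‖q‖^(n*(n+1)/2) * ((n:ℝ) * ‖y‖^(n-1))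
      ≤ (0.31:ℝ)^(n*(n+1)/2) * ((((n:ℝ)+2)^2) * 9^n) := by
        apply mul_le_mul (qpow_bound hq' _) ?_ (by positivity) (by positivity)
        apply mul_le_mul ?_ (pow_bound hy n (n-1) (Nat.sub_le n 1)) (by positivity) (by positivity)
        nlinarith [sq_nonneg ((n:ℝ)+1)]
    _ = uMaj n := by unfold uMaj; ring

lemma B2 (hq' : ‖q‖ ≤ 0.31) (hy : ‖y‖ ≤ 9) (n : ℕ) : ‖q^(n*(n+1)/2) * ((n:ℂ) * (((n-1:ℕ):ℂ) * y^(n-1-1)))‖ ≤ uMaj n := by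
  rw [norm_mul, norm_mul, norm_mul, norm_pow, norm_pow, Complex.norm_natCast,
    Complex.norm_natCast]
  calc ‖q‖^(n*(n+1)/2) * ((n:ℝ) * (((n-1:ℕ):ℝ) * ‖y‖^(n-1-1)))
      ≤ (0.31:ℝ)^(n*(n+1)/2) * ((((n:ℝ)+2)^2) * 9^n) := by
        apply mul_le_mul (qpow_bound hq' _) ?_ (by positivity) (by positivity)
        have hyb : ‖y‖^(n-1-1) ≤ (9:ℝ)^n := pow_bound hy n (n-1-1) (by omega)
        have hc : ((n:ℝ)) * ((n-1:ℕ):ℝ) ≤ ((n:ℝ)+2)^2 := by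
          have : ((n-1:ℕ):ℝ) ≤ (n:ℝ) := by exact_mod_cast Nat.sub_le n 1
          nlinarith [(Nat.cast_nonneg n : (0:ℝ) ≤ (n:ℝ))]
        calc (n:ℝ) * (((n-1:ℕ):ℝ) * ‖y‖^(n-1-1)) = ((n:ℝ) * ((n-1:ℕ):ℝ)) * ‖y‖^(n-1-1) := by ring
          _ ≤ ((n:ℝ)+2)^2 * 9^n := by
              apply mul_le_mul hc hyb (by positivity) (by positivity)
    _ = uMaj n := by unfold uMaj; ring

end bounds

/-- For 0 < |q| ≤ 0.31 and |x| ≤ 8.842, the second x-derivative of θ does not vanish. -/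
theorem theta_xx_ne_zero (q x : ℂ) (hq : 0 < ‖q‖) (hq' : ‖q‖ ≤ 0.31)
    (hx : ‖x‖ ≤ 8.842) :
    iteratedDeriv 2 (theta q) x ≠ 0 := by
  have hqn : ‖q‖ ≤ 0.31 := hq'
  have hxn : ‖x‖ ≤ 8.842 := hx
  have hqpos : 0 < ‖q‖ := hq
  have hx9 : ‖x‖ ≤ 9 := hxn.trans (by norm_num)
  set s : Set ℂ := Metric.ball (0:ℂ) 9 with hs
  have hso : IsOpen s := Metric.isOpen_ball
  have hsc : IsPreconnected s := (convex_ball _ _).isPreconnected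
  have h0s : (0:ℂ) ∈ s := by simp [hs]
  have hxs : x ∈ s := by simp only [hs, Metric.mem_ball, dist_zero_right]; linarith
  have hmem : ∀ y ∈ s, ‖y‖ ≤ 9 := by
    intro y hy
    simp only [hs, Metric.mem_ball, dist_zero_right] at hy
    linarith
  -- First derivative
  have hA : ∀ y ∈ s, HasDerivAt (fun z => ∑' n : ℕ, q^(n*(n+1)/2) * z^n)
      (∑' n : ℕ, q^(n*(n+1)/2) * ((n:ℂ) * y^(n-1))) y := by
    intro y hy
    apply hasDerivAt_tsum_of_isPreconnected sumU hso hsc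
      (fun n z _ => (hasDerivAt_pow n z).const_mul _)
      (fun n z hz => B1 hqn (hmem z hz) n) h0s ?_ hy
    exact Summable.of_norm_bounded sumU (fun n => B0 hqn (by norm_num) n)
  -- Second derivative
  have hB : HasDerivAt (fun y => ∑' n : ℕ, q^(n*(n+1)/2) * ((n:ℂ) * y^(n-1)))
      (∑' n : ℕ, q^(n*(n+1)/2) * ((n:ℂ) * (((n-1:ℕ):ℂ) * x^(n-1-1)))) x := by
    apply hasDerivAt_tsum_of_isPreconnected sumU hso hsc
      (fun n z _ => (((hasDerivAt_pow (n-1) z).const_mul ((n:ℂ))).const_mul (q^(n*(n+1)/2))))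
      (fun n z hz => B2 hqn (hmem z hz) n) h0s ?_ hxs
    exact Summable.of_norm_bounded sumU (fun n => B1 hqn (by norm_num) n)
  -- Identify iteratedDeriv 2
  have hth : theta q = fun z => ∑' n : ℕ, q^(n*(n+1)/2) * z^n := rfl
  have heq : Set.EqOn (deriv (theta q)) (fun y => ∑' n : ℕ, q^(n*(n+1)/2) * ((n:ℂ) * y^(n-1))) s := by
    intro y hy
    rw [hth]
    exact (hA y hy).deriv
  have heq' : deriv (theta q) =ᶠ[nhds x]
      (fun y => ∑' n : ℕ, q^(n*(n+1)/2) * ((n:ℂ) * y^(n-1))) :=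
    Filter.eventuallyEq_of_mem (hso.mem_nhds hxs) heq
  have hD2 : iteratedDeriv 2 (theta q) x
      = ∑' n : ℕ, q^(n*(n+1)/2) * ((n:ℂ) * (((n-1:ℕ):ℂ) * x^(n-1-1))) := by
    rw [show (2:ℕ) = 1 + 1 from rfl, iteratedDeriv_succ, iteratedDeriv_one]
    rw [heq'.deriv_eq]
    exact hB.deriv
  rw [hD2]
  -- Now show the sum is nonzero
  set a : ℕ → ℂ := fun n => q^(n*(n+1)/2) * ((n:ℂ) * (((n-1:ℕ):ℂ) * x^(n-1-1))) with ha
  have hsa : Summable a :=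
    Summable.of_norm_bounded sumU (fun n => B2 hqn hx9 n)
  have hsa1 : Summable (fun n => a (n+1)) := (summable_nat_add_iff 1).mpr hsa
  have hsa2 : Summable (fun n => a (n+2)) := (summable_nat_add_iff 2).mpr hsa
  have hsa3 : Summable (fun n => a (n+3)) := (summable_nat_add_iff 3).mpr hsa
  have hsplit : ∑' n, a n = a 0 + (a 1 + (a 2 + ∑' n, a (n+3))) := by
    rw [Summable.tsum_eq_zero_add hsa, Summable.tsum_eq_zero_add hsa1, Summable.tsum_eq_zero_add hsa2]
  have ha0 : a 0 = 0 := by simp [ha]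
  have ha1 : a 1 = 0 := by simp [ha]
  have ha2 : a 2 = 2 * q^3 := by
    simp only [ha]
    norm_num
    ring
  -- exponent bookkeeping
  have he : ∀ n : ℕ, (n+3)*(n+3+1)/2 = 3 + ((n+3)*(n+4)/2 - 3) := by
    intro n
    have h2 : 2 ∣ (n+3)*(n+3+1) := (Nat.even_mul_succ_self (n+3)).two_dvd
    have h3 : (n+3)*(n+3+1) = n*n + 7*n + 12 := by ring
    have h4 : (n+3)*(n+4) = n*n + 7*n + 12 := by ring
    omega
  -- the real majorant for tail terms
  set v : ℕ → ℝ := fun n => (0.31:ℝ)^((n+3)*(n+4)/2 - 3) * (((n:ℝ)+3) * (((n:ℝ)+2) * (8.842:ℝ)^(n+1))) with hv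
  have hvpos : ∀ n, 0 < v n := by intro n; rw [hv]; positivity
  have htermb : ∀ n : ℕ, ‖a (n+3)‖ ≤ ‖q‖^3 * v n := by
    intro n
    simp only [ha]
    rw [norm_mul, norm_mul, norm_mul, norm_pow, norm_pow, Complex.norm_natCast,
      Complex.norm_natCast]
    have hsub1 : (n+3-1 : ℕ) = n+2 := by omega
    have hsub2 : (n+3-1-1 : ℕ) = n+1 := by omega
    rw [hsub2, hsub1, he n, pow_add]
    have hq3 : ‖q‖^((n+3)*(n+4)/2 - 3) ≤ (0.31:ℝ)^((n+3)*(n+4)/2 - 3) :=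
      pow_le_pow_left₀ (norm_nonneg q) hqn _
    have hx3 : ‖x‖^(n+1) ≤ (8.842:ℝ)^(n+1) :=
      pow_le_pow_left₀ (norm_nonneg x) hxn _
    have hcast : ((n+3 : ℕ):ℝ) = (n:ℝ)+3 := by push_cast; ring
    have hcast2 : ((n+2 : ℕ):ℝ) = (n:ℝ)+2 := by push_cast; ring
    rw [hcast, hcast2, hv]
    calc ‖q‖^3 * ‖q‖^((n+3)*(n+4)/2 - 3) * (((n:ℝ)+3) * (((n:ℝ)+2) * ‖x‖^(n+1)))
        ≤ ‖q‖^3 * (0.31:ℝ)^((n+3)*(n+4)/2 - 3) * (((n:ℝ)+3) * (((n:ℝ)+2) * (8.842:ℝ)^(n+1))) := by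
          apply mul_le_mul
          · exact mul_le_mul_of_nonneg_left hq3 (by positivity)
          · apply mul_le_mul_of_nonneg_left ?_ (by positivity)
            exact mul_le_mul_of_nonneg_left hx3 (by positivity)
          · positivity
          · positivity
      _ = ‖q‖^3 * ((0.31:ℝ)^((n+3)*(n+4)/2 - 3) * (((n:ℝ)+3) * (((n:ℝ)+2) * (8.842:ℝ)^(n+1)))) := by ring
  -- v decays at least geometrically with ratio 1/2
  have hvrec : ∀ n : ℕ, v (n+1) ≤ (1/2) * v n := by
    intro n
    rw [hv]
    simp only
    have hE : (n+1+3)*(n+1+4)/2 - 3 = ((n+3)*(n+4)/2 - 3) + (n+4) := by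
      have h2 : 2 ∣ (n+3)*(n+4) := (Nat.even_mul_succ_self (n+3)).two_dvd
      have h2' : 2 ∣ (n+4)*(n+5) := (Nat.even_mul_succ_self (n+4)).two_dvd
      have h3 : (n+3)*(n+4) = n*n + 7*n + 12 := by ring
      have h4 : (n+4)*(n+5) = n*n + 9*n + 20 := by ring
      have h5 : (n+1+3)*(n+1+4) = (n+4)*(n+5) := by ring
      omega
    rw [hE, pow_add]
    push_cast
    have hp4 : (0.31:ℝ)^(n+4) ≤ (0.31:ℝ)^4 :=
      pow_le_pow_of_le_one (by norm_num) (by norm_num) (by omega)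
    have hcast : ((n:ℝ)+1+3) = (n:ℝ)+4 := by ring
    have key : ((n:ℝ)+4) * (((n:ℝ)+3) * ((0.31:ℝ)^(n+4) * (8.842:ℝ)))
        ≤ (1/2) * (((n:ℝ)+3) * ((n:ℝ)+2)) := by
      have h1 : ((n:ℝ)+4) * (((n:ℝ)+3) * ((0.31:ℝ)^(n+4) * (8.842:ℝ)))
          ≤ ((n:ℝ)+4) * (((n:ℝ)+3) * ((0.31:ℝ)^4 * (8.842:ℝ))) := by
        have hn0 : (0:ℝ) ≤ (n:ℝ) := Nat.cast_nonneg n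
        apply mul_le_mul_of_nonneg_left ?_ (by positivity)
        apply mul_le_mul_of_nonneg_left ?_ (by positivity)
        exact mul_le_mul_of_nonneg_right hp4 (by norm_num)
      have hn0 : (0:ℝ) ≤ (n:ℝ) := Nat.cast_nonneg n
      nlinarith
    calc (0.31:ℝ)^((n+3)*(n+4)/2 - 3) * (0.31:ℝ)^(n+4) * (((n:ℝ)+1+3) * (((n:ℝ)+1+2) * (8.842:ℝ)^(n+1+1)))
        = (((n:ℝ)+4) * (((n:ℝ)+3) * ((0.31:ℝ)^(n+4) * (8.842:ℝ))))
          * ((0.31:ℝ)^((n+3)*(n+4)/2 - 3) * (8.842:ℝ)^(n+1)) := by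
          rw [pow_succ]; ring
      _ ≤ ((1/2) * (((n:ℝ)+3) * ((n:ℝ)+2)))
          * ((0.31:ℝ)^((n+3)*(n+4)/2 - 3) * (8.842:ℝ)^(n+1)) := by
          apply mul_le_mul_of_nonneg_right key (by positivity)
      _ = (1/2) * ((0.31:ℝ)^((n+3)*(n+4)/2 - 3) * (((n:ℝ)+3) * (((n:ℝ)+2) * (8.842:ℝ)^(n+1)))) := by ring
  have hgeo : ∀ n : ℕ, v (n+2) ≤ v 2 * (1/2)^n := by
    intro n
    induction n with
    | zero => simp
    | succ k ih =>
      calc v (k+1+2) = v ((k+2)+1) := by ring_nf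
        _ ≤ (1/2) * v (k+2) := hvrec (k+2)
        _ ≤ (1/2) * (v 2 * (1/2)^k) := by
            apply mul_le_mul_of_nonneg_left ih (by norm_num)
        _ = v 2 * (1/2)^(k+1) := by ring
  have hsgeo : Summable (fun n : ℕ => v 2 * (1/2:ℝ)^n) :=
    (summable_geometric_of_lt_one (by norm_num) (by norm_num)).mul_left _
  have hsv2 : Summable (fun n => v (n+2)) :=
    Summable.of_nonneg_of_le (fun n => (hvpos _).le) hgeo hsgeo
  have hsv : Summable v := (summable_nat_add_iff 2).mp hsv2
  have hsv1 : Summable (fun n => v (n+1)) := (summable_nat_add_iff 1).mpr hsv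
  have htail : ∑' n, v (n+2) ≤ 2 * v 2 := by
    calc ∑' n, v (n+2) ≤ ∑' n : ℕ, v 2 * (1/2:ℝ)^n := Summable.tsum_le_tsum hgeo hsv2 hsgeo
      _ = v 2 * ∑' n : ℕ, (1/2:ℝ)^n := tsum_mul_left
      _ = v 2 * 2 := by rw [tsum_geometric_of_lt_one (by norm_num) (by norm_num)]; norm_num
      _ = 2 * v 2 := by ring
  have hvsum : ∑' n, v n ≤ v 0 + v 1 + 2 * v 2 := by
    rw [Summable.tsum_eq_zero_add hsv, Summable.tsum_eq_zero_add hsv1]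
    have : ∑' n, v (n+1+1) = ∑' n, v (n+2) := by norm_num
    rw [this]
    linarith [htail]
  have hnum : v 0 + v 1 + 2 * v 2 < 2 := by
    rw [hv]
    norm_num
  -- bound the tail of a
  have hsan : Summable (fun n => ‖a (n+3)‖) :=
    Summable.of_nonneg_of_le (fun n => norm_nonneg _)
      (fun n => htermb n) ((hsv.mul_left _))
  have htail_a : ‖∑' n, a (n+3)‖ < 2 * ‖q‖^3 := by
    calc ‖∑' n, a (n+3)‖ ≤ ∑' n, ‖a (n+3)‖ := norm_tsum_le_tsum_norm hsan
      _ ≤ ∑' n, ‖q‖^3 * v n := Summable.tsum_le_tsum (fun n => htermb n) hsan (hsv.mul_left _)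
      _ = ‖q‖^3 * ∑' n, v n := tsum_mul_left
      _ ≤ ‖q‖^3 * (v 0 + v 1 + 2 * v 2) := by
          apply mul_le_mul_of_nonneg_left hvsum (by positivity)
      _ < ‖q‖^3 * 2 := by
          apply mul_lt_mul_of_pos_left hnum (by positivity)
      _ = 2 * ‖q‖^3 := by ring
  have hnorm2q : ‖(2:ℂ) * q^3‖ = 2 * ‖q‖^3 := by
    rw [norm_mul, norm_pow]
    norm_num
  intro hzero
  rw [hsplit, ha0, ha1, ha2] at hzero
  have : (2:ℂ) * q^3 = -(∑' n, a (n+3)) := by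
    have := hzero
    ring_nf at this ⊢
    linear_combination this
  have hcontra : ‖(2:ℂ) * q^3‖ ≤ ‖∑' n, a (n+3)‖ := by
    rw [this, norm_neg]
  rw [hnorm2q] at hcontra
  linarith
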